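/- arXiv:1307.3723 — 8 statements merged into one kernel-verified Lean document; each statement's English description precedes it below -/
import Mathlib

section
/- Let A be a column stochastic nonnegative matrix, h ∈ {1,...,n}, and α ≥ τ_{n−1}(A) = 1 − Σ_i min_j a_{ij}. Define ℓ_i = min_j a_{ij} for i ≠ h and ℓ_h = 1 − Σ_{i≠h} ℓ_i − α. Then the matrix C = A − ℓ eᵀ is entrywise nonnegative. -/
/-- Lemma (Rothblum et al.): for column stochastic nonnegative `A`, `h ∈ Fin n`
and `α ≥ τ_{n-1}(A) = 1 - ∑_i min_j A i j`, with `ℓ i = min_j A i j` for `i ≠ h`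
and `ℓ h = 1 - ∑_{i ≠ h} ℓ i - α`, the matrix `C = A - ℓ eᵀ` is nonnegative. -/
theorem stmt_7 (n : ℕ) [NeZero n] (A : Matrix (Fin n) (Fin n) ℝ)
    (hA : ∀ i j, 0 ≤ A i j) (hstoch : ∀ j, ∑ i, A i j = 1)
    (α : ℝ)
    (hα : 1 - ∑ i, Finset.univ.inf' Finset.univ_nonempty (fun j => A i j) ≤ α)
    (h : Fin n) (ℓ : Fin n → ℝ)
    (hℓ : ∀ i, i ≠ h → ℓ i = Finset.univ.inf' Finset.univ_nonempty (fun j => A i j))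
    (hℓh : ℓ h = 1 - (∑ i ∈ Finset.univ.erase h, ℓ i) - α) :
    ∀ i j, 0 ≤ A i j - ℓ i := by
  intro i j
  have hmin : ∀ i, Finset.univ.inf' Finset.univ_nonempty (fun j => A i j) ≤ A i j :=
    fun i => Finset.inf'_le _ (Finset.mem_univ j)
  by_cases hi : i = h
  · subst hi
    have hsum : ∑ i ∈ Finset.univ.erase i, ℓ i
        = ∑ k ∈ Finset.univ.erase i, Finset.univ.inf' Finset.univ_nonempty (fun j => A k j) :=
      Finset.sum_congr rfl (fun k hk => hℓ k (Finset.ne_of_mem_erase hk))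
    have hsplit : ∑ k, Finset.univ.inf' Finset.univ_nonempty (fun j => A k j)
        = Finset.univ.inf' Finset.univ_nonempty (fun j => A i j)
          + ∑ k ∈ Finset.univ.erase i, Finset.univ.inf' Finset.univ_nonempty (fun j => A k j) :=
      (Finset.add_sum_erase _ _ (Finset.mem_univ i)).symm
    have := hmin i
    rw [hℓh, hsum]
    linarith
  · rw [hℓ i hi]
    linarith [hmin i]
end

section
/- Let A be a column stochastic nonnegative matrix. Every eigenvalue λ of A with λ ≠ 1 satisfies |λ| ≤ τ_{n−1}(A) = 1 − Σ_i min_j a_{ij}. -/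
/-- For a column stochastic nonnegative matrix `A`, every (complex) eigenvalue
`μ ≠ 1` of `A` satisfies `|μ| ≤ τ_{n-1}(A) = 1 - ∑_i min_j A i j`. -/
theorem stmt_9 (n : ℕ) [NeZero n] (A : Matrix (Fin n) (Fin n) ℝ)
    (hA : ∀ i j, 0 ≤ A i j) (hstoch : ∀ j, ∑ i, A i j = 1) :
    ∀ μ ∈ spectrum ℂ (A.map (Complex.ofReal)), μ ≠ 1 →
      ‖μ‖ ≤ 1 - ∑ i, Finset.univ.inf' Finset.univ_nonempty (fun j => A i j) := by
  intro μ hμ hμ1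
  set M := A.map (Complex.ofReal) with hMdef
  set m : Fin n → ℝ := fun i => Finset.univ.inf' Finset.univ_nonempty (fun j => A i j)
    with hmdef
  have hmle : ∀ i j, m i ≤ A i j := fun i j => Finset.inf'_le _ (Finset.mem_univ j)
  rw [spectrum.mem_iff] at hμ
  have hdet : (algebraMap ℂ (Matrix (Fin n) (Fin n) ℂ) μ - M).det = 0 := by
    by_contra h
    exact hμ ((Matrix.isUnit_iff_isUnit_det _).2 (Ne.isUnit h))
  obtain ⟨v, hv0, hv⟩ := Matrix.exists_mulVec_eq_zero_iff.mpr hdet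
  have hMv : M.mulVec v = μ • v := by
    rw [Matrix.sub_mulVec, Algebra.algebraMap_eq_smul_one, Matrix.smul_mulVec,
      Matrix.one_mulVec, sub_eq_zero] at hv
    exact hv.symm
  have hMv' : ∀ i, ∑ j, M i j * v j = μ * v i := by
    intro i
    have := congrFun hMv i
    simpa [Matrix.mulVec, dotProduct] using this
  have hcol : ∀ j, ∑ i, M i j = 1 := by
    intro j
    have h1 : ((∑ i, A i j : ℝ) : ℂ) = 1 := by rw [hstoch j]; norm_num
    rw [← h1]
    push_cast
    rfl
  have hsum : ∑ j, v j = 0 := by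
    have h1 : μ * ∑ j, v j = ∑ j, v j := by
      calc μ * ∑ j, v j = ∑ i, (μ * v i) := by rw [Finset.mul_sum]
        _ = ∑ i, ∑ j, M i j * v j := by simp_rw [hMv']
        _ = ∑ j, (∑ i, M i j) * v j := by rw [Finset.sum_comm]; simp_rw [Finset.sum_mul]
        _ = ∑ j, v j := by simp_rw [hcol]; simp
    have h2 : (μ - 1) * ∑ j, v j = 0 := by linear_combination h1
    rcases mul_eq_zero.mp h2 with h | h
    · exact absurd (sub_eq_zero.mp h) hμ1
    · exact h
  have key : ∀ i, ‖μ‖ * ‖v i‖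
      ≤ ∑ j, (A i j - m i) * ‖v j‖ := by
    intro i
    have h1 : ∑ j, ((A i j - m i : ℝ) : ℂ) * v j = μ * v i := by
      have h2 : ∑ j, ((A i j - m i : ℝ) : ℂ) * v j
          = (∑ j, M i j * v j) - (m i : ℂ) * ∑ j, v j := by
        rw [Finset.mul_sum, ← Finset.sum_sub_distrib]
        refine Finset.sum_congr rfl fun j _ => ?_
        have : M i j = ((A i j : ℝ) : ℂ) := rfl
        rw [this]
        push_cast
        ring
      rw [h2, hsum, mul_zero, sub_zero, hMv' i]
    calc ‖μ‖ * ‖v i‖ = ‖μ * v i‖ := (norm_mul _ _).symm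
      _ = ‖∑ j, ((A i j - m i : ℝ) : ℂ) * v j‖ := by rw [h1]
      _ ≤ ∑ j, ‖((A i j - m i : ℝ) : ℂ) * v j‖ :=
          norm_sum_le _ _
      _ = ∑ j, (A i j - m i) * ‖v j‖ := by
          refine Finset.sum_congr rfl fun j _ => ?_
          rw [norm_mul, Complex.norm_real, Real.norm_eq_abs, abs_of_nonneg (sub_nonneg.mpr (hmle i j))]
  set S := ∑ j, ‖v j‖ with hS
  have hSpos : 0 < S := by
    obtain ⟨j, hj⟩ := Function.ne_iff.mp hv0
    exact Finset.sum_pos' (fun j _ => norm_nonneg _)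
      ⟨j, Finset.mem_univ j, norm_pos_iff.mpr hj⟩
  have main : ‖μ‖ * S ≤ (1 - ∑ i, m i) * S := by
    calc ‖μ‖ * S = ∑ i, ‖μ‖ * ‖v i‖ := by
          rw [hS, Finset.mul_sum]
      _ ≤ ∑ i, ∑ j, (A i j - m i) * ‖v j‖ := Finset.sum_le_sum fun i _ => key i
      _ = ∑ j, (∑ i, (A i j - m i)) * ‖v j‖ := by
          rw [Finset.sum_comm]; simp_rw [Finset.sum_mul]
      _ = ∑ j, (1 - ∑ i, m i) * ‖v j‖ := by
          refine Finset.sum_congr rfl fun j _ => ?_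
          rw [Finset.sum_sub_distrib, hstoch j]
      _ = (1 - ∑ i, m i) * S := by rw [hS, ← Finset.mul_sum]
  exact le_of_mul_le_mul_right main hSpos
end

section
/- Let A be a column stochastic nonnegative matrix with max_i min_j a_{ij} > 0. Let ℓ be the vector ℓ_i = min_j a_{ij} and B the column stochastic matrix with τ_{n−1}(A)·B = A − ℓ eᵀ. Then the matrix I − τ_{n−1}(A)·B is invertible, and if x ≥ 0 satisfies Ax = x and eᵀx = 1, then x = (I − τ_{n−1}(A)·B)^{−1} ℓ. -/
/-- Let `A` be column stochastic nonnegative with `max_i min_j A i j > 0`,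
`ℓ i = min_j A i j`, and `B` column stochastic with `τ_{n-1}(A) • B = A - ℓ eᵀ`.
Then `I - τ_{n-1}(A) • B` is invertible and any nonnegative `x` with `A x = x`
and `eᵀ x = 1` satisfies `x = (I - τ_{n-1}(A) • B)⁻¹ ℓ`. -/
theorem stmt_11 (n : ℕ) [NeZero n] (A B : Matrix (Fin n) (Fin n) ℝ)
    (hA : ∀ i j, 0 ≤ A i j) (hstoch : ∀ j, ∑ i, A i j = 1)
    (hmax : 0 < Finset.univ.sup' Finset.univ_nonempty
      (fun i => Finset.univ.inf' Finset.univ_nonempty (fun j => A i j)))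
    (hB : ∀ i j, 0 ≤ B i j) (hBstoch : ∀ j, ∑ i, B i j = 1)
    (hτB : ∀ i j,
      (1 - ∑ i', Finset.univ.inf' Finset.univ_nonempty (fun j' => A i' j')) * B i j
        = A i j - Finset.univ.inf' Finset.univ_nonempty (fun j' => A i j')) :
    IsUnit (1 - (1 - ∑ i', Finset.univ.inf' Finset.univ_nonempty (fun j' => A i' j')) • B) ∧
    ∀ x : Fin n → ℝ, (∀ i, 0 ≤ x i) → A.mulVec x = x → ∑ i, x i = 1 →
      x = (1 - (1 - ∑ i', Finset.univ.inf' Finset.univ_nonempty (fun j' => A i' j')) • B)⁻¹.mulVec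
            (fun i => Finset.univ.inf' Finset.univ_nonempty (fun j' => A i j')) := by
  set ℓ : Fin n → ℝ := fun i => Finset.univ.inf' Finset.univ_nonempty (fun j' => A i j')
    with hℓ
  have hℓnn : ∀ i, 0 ≤ ℓ i := fun i => Finset.le_inf' _ _ (fun j _ => hA i j)
  have hℓle : ∀ i j, ℓ i ≤ A i j := fun i j => Finset.inf'_le _ (Finset.mem_univ j)
  set τ : ℝ := 1 - ∑ i', ℓ i' with hτdef
  have hτB' : ∀ i j, τ * B i j = A i j - ℓ i := hτB
  have j0 : Fin n := ⟨0, Nat.pos_of_ne_zero (NeZero.ne n)⟩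
  have hsum_le : ∑ i, ℓ i ≤ 1 :=
    (Finset.sum_le_sum fun i _ => hℓle i j0).trans_eq (hstoch j0)
  have hsum_pos : 0 < ∑ i, ℓ i := by
    obtain ⟨i, -, hi⟩ := (Finset.lt_sup'_iff _).mp hmax
    exact Finset.sum_pos' (fun i _ => hℓnn i) ⟨i, Finset.mem_univ i, hi⟩
  have hτnn : 0 ≤ τ := by rw [hτdef]; linarith
  have hτlt : τ < 1 := by rw [hτdef]; linarith
  have hBle : ∀ j, B j j ≤ 1 := fun j => by
    have h1 : B j j ≤ ∑ i, B i j :=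
      Finset.single_le_sum (fun i _ => hB i j) (Finset.mem_univ j)
    rw [hBstoch j] at h1; exact h1
  set M : Matrix (Fin n) (Fin n) ℝ := 1 - τ • B with hM
  have hdet : M.det ≠ 0 := by
    apply det_ne_zero_of_sum_col_lt_diag
    intro j
    have hdiag : M j j = 1 - τ * B j j := by
      simp [hM, Matrix.one_apply, Matrix.sub_apply]
    have hsum : ∑ i ∈ Finset.univ.erase j, ‖M i j‖ = τ * (1 - B j j) := by
      have : ∀ i ∈ Finset.univ.erase j, ‖M i j‖ = τ * B i j := by
        intro i hi
        have hij : i ≠ j := Finset.ne_of_mem_erase hi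
        have : M i j = -(τ * B i j) := by
          simp [hM, Matrix.one_apply_ne hij, Matrix.sub_apply]
        rw [this, norm_neg, Real.norm_eq_abs,
          abs_of_nonneg (mul_nonneg hτnn (hB i j))]
      rw [Finset.sum_congr rfl this, ← Finset.mul_sum]
      congr 1
      have h2 := Finset.sum_erase_add Finset.univ (fun i => B i j) (Finset.mem_univ j)
      rw [hBstoch j] at h2
      linarith
    rw [hsum, hdiag, Real.norm_eq_abs, abs_of_nonneg]
    · nlinarith [hB j j, hBle j]
    · nlinarith [hB j j, hBle j]
  have hunit : IsUnit M := (Matrix.isUnit_iff_isUnit_det M).mpr (isUnit_iff_ne_zero.mpr hdet)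
  refine ⟨hunit, ?_⟩
  intro x hx hAx hxsum
  have hMx : M.mulVec x = ℓ := by
    funext i
    have hAxi : ∑ j, A i j * x j = x i := congrFun hAx i
    have hBxi : τ * ∑ j, B i j * x j = x i - ℓ i := by
      rw [Finset.mul_sum]
      have : ∀ j ∈ Finset.univ, τ * (B i j * x j) = (A i j - ℓ i) * x j := by
        intro j _
        rw [← mul_assoc, hτB' i j]
      rw [Finset.sum_congr rfl this]
      simp only [sub_mul, Finset.sum_sub_distrib, hAxi, ← Finset.mul_sum, hxsum, mul_one]
    have : M.mulVec x i = x i - τ * ∑ j, B i j * x j := by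
      simp only [hM, Matrix.mulVec, dotProduct, Matrix.sub_apply, Matrix.smul_apply,
        smul_eq_mul, Matrix.one_apply, sub_mul, ite_mul, one_mul, zero_mul,
        Finset.sum_sub_distrib, Finset.sum_ite_eq, Finset.mem_univ, if_true, Finset.mul_sum,
        mul_assoc]
    rw [this, hBxi]
    ring
  have : M⁻¹.mulVec (M.mulVec x) = x := by
    rw [Matrix.mulVec_mulVec, Matrix.nonsing_inv_mul M (isUnit_iff_ne_zero.mpr hdet),
      Matrix.one_mulVec]
  rw [← this, hMx]
end

section
/- Let A be a column stochastic nonnegative matrix, ℓ the vector ℓ_i = min_j a_{ij}, and B a column stochastic matrix with τ_{n−1}(A)·B = A − ℓ eᵀ, where 0 < τ_{n−1}(A). If I − τ_{n−1}(A)·B is invertible, then τ_{n−1}(A) < 1 and the vector x = (I − τ_{n−1}(A)·B)^{−1} ℓ is nonnegative, satisfies eᵀx = 1, and Ax = x. -/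
open scoped Matrix

section AuxNeumann

attribute [local instance] Matrix.linftyOpNormedRing Matrix.linftyOpNormedAlgebra

lemma aux_inv_nonneg (n : ℕ) (M : Matrix (Fin n) (Fin n) ℝ)
    (hM : ∀ i j, 0 ≤ M i j) (hrow : ∀ i, ∑ j, M i j < 1) :
    ∀ i j, 0 ≤ Ring.inverse (1 - M) i j := by
  have hlt : ‖M‖ < 1 := by
    rw [Matrix.linfty_opNorm_def]
    have : (Finset.univ : Finset (Fin n)).sup (fun i => ∑ j, ‖M i j‖₊) < 1 := by
      rw [Finset.sup_lt_iff (by norm_num : (⊥ : NNReal) < 1)]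
      intro i _
      rw [← NNReal.coe_lt_coe]
      push_cast
      have : ∀ j ∈ Finset.univ, ‖M i j‖ = M i j := by
        intro j _
        simp [Real.norm_eq_abs, abs_of_nonneg (hM i j)]
      rw [Finset.sum_congr rfl this]
      exact hrow i
    exact_mod_cast this
  have hpow : ∀ (k : ℕ) i j, 0 ≤ (M ^ k) i j := by
    intro k
    induction k with
    | zero =>
      intro i j
      simp only [pow_zero, Matrix.one_apply]
      split <;> norm_num
    | succ k ih =>
      intro i j
      rw [pow_succ, Matrix.mul_apply]
      exact Finset.sum_nonneg fun l _ => mul_nonneg (ih i l) (hM l j)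
  have hsum : Summable fun k : ℕ => M ^ k := summable_geometric_of_norm_lt_one hlt
  have hgeom : ∑' k : ℕ, M ^ k = Ring.inverse (1 - M) := geom_series_eq_inverse M hlt
  intro i j
  rw [← hgeom]
  let E : Matrix (Fin n) (Fin n) ℝ →L[ℝ] ℝ :=
    LinearMap.toContinuousLinearMap
      { toFun := fun N => N i j
        map_add' := fun a b => rfl
        map_smul' := fun c a => rfl }
  have hmap : E (∑' k : ℕ, M ^ k) = ∑' k : ℕ, E (M ^ k) := E.map_tsum hsum
  have heq : (∑' k : ℕ, M ^ k) i j = ∑' k : ℕ, (M ^ k) i j := hmap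
  rw [heq]
  exact tsum_nonneg fun k => hpow k i j

end AuxNeumann

/-- Let `A` be column stochastic nonnegative, `ℓ i = min_j A i j`, `B` column
stochastic with `τ • B = A - ℓ eᵀ` where `τ = τ_{n-1}(A) > 0`.  If `I - τ • B`
is invertible, then `τ < 1` and `x = (I - τ • B)⁻¹ ℓ` is nonnegative with
`eᵀ x = 1` and `A x = x`. -/
theorem stmt_12 (n : ℕ) [NeZero n] (A B : Matrix (Fin n) (Fin n) ℝ)
    (hA : ∀ i j, 0 ≤ A i j) (hstoch : ∀ j, ∑ i, A i j = 1)
    (hτpos : 0 < 1 - ∑ i, Finset.univ.inf' Finset.univ_nonempty (fun j => A i j))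
    (hB : ∀ i j, 0 ≤ B i j) (hBstoch : ∀ j, ∑ i, B i j = 1)
    (hτB : ∀ i j,
      (1 - ∑ i', Finset.univ.inf' Finset.univ_nonempty (fun j' => A i' j')) * B i j
        = A i j - Finset.univ.inf' Finset.univ_nonempty (fun j' => A i j'))
    (hinv : IsUnit
      (1 - (1 - ∑ i', Finset.univ.inf' Finset.univ_nonempty (fun j' => A i' j')) • B)) :
    (1 - ∑ i, Finset.univ.inf' Finset.univ_nonempty (fun j => A i j) < 1) ∧
    ∀ x : Fin n → ℝ,
      x = (1 - (1 - ∑ i', Finset.univ.inf' Finset.univ_nonempty (fun j' => A i' j')) • B)⁻¹.mulVec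
            (fun i => Finset.univ.inf' Finset.univ_nonempty (fun j' => A i j')) →
      (∀ i, 0 ≤ x i) ∧ ∑ i, x i = 1 ∧ A.mulVec x = x := by
  set ℓ : Fin n → ℝ := fun i => Finset.univ.inf' Finset.univ_nonempty (fun j => A i j) with hℓdef
  set τ : ℝ := 1 - ∑ i, ℓ i with hτdef
  set C : Matrix (Fin n) (Fin n) ℝ := 1 - τ • B with hCdef
  have hℓ0 : ∀ i, 0 ≤ ℓ i := by
    intro i
    exact Finset.le_inf' _ _ fun j _ => hA i j
  have hℓA : ∀ i j, ℓ i ≤ A i j := fun i j => Finset.inf'_le _ (Finset.mem_univ j)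
  have hτle : τ ≤ 1 := by
    have : (0:ℝ) ≤ ∑ i, ℓ i := Finset.sum_nonneg fun i _ => hℓ0 i
    simp [hτdef]; linarith
  have hdet : IsUnit C.det := (Matrix.isUnit_iff_isUnit_det C).mp hinv
  have hCC : C * C⁻¹ = 1 := Matrix.mul_nonsing_inv C hdet
  -- τ < 1
  have hτlt : τ < 1 := by
    rcases lt_or_eq_of_le hτle with h | h
    · exact h
    · exfalso
      have hvC : (fun _ => (1:ℝ)) ᵥ* C = 0 := by
        funext j
        simp only [hCdef, Matrix.vecMul, dotProduct]
        simp only [Matrix.sub_apply, Matrix.one_apply, Matrix.smul_apply, smul_eq_mul, one_mul]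
        rw [Finset.sum_sub_distrib, ← Finset.mul_sum, hBstoch j, Finset.sum_ite_eq']
        simp [h]
      have : (fun _ => (1:ℝ)) ᵥ* (C * C⁻¹) = 0 := by
        rw [← Matrix.vecMul_vecMul, hvC, Matrix.zero_vecMul]
      rw [hCC, Matrix.vecMul_one] at this
      have := congrFun this ⟨0, Nat.pos_of_ne_zero (NeZero.ne n)⟩
      norm_num at this
  refine ⟨hτlt, ?_⟩
  -- nonnegativity of C⁻¹
  have hinvnn : ∀ i j, 0 ≤ C⁻¹ i j := by
    have key := aux_inv_nonneg n (τ • B)ᵀ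
      (fun i j => by
        simp only [Matrix.transpose_apply, Matrix.smul_apply, smul_eq_mul]
        exact mul_nonneg (le_of_lt hτpos) (hB j i))
      (fun i => by
        simp only [Matrix.transpose_apply, Matrix.smul_apply, smul_eq_mul]
        rw [← Finset.mul_sum, hBstoch i, mul_one]
        exact hτlt)
    intro i j
    have hT : Cᵀ = 1 - (τ • B)ᵀ := by
      rw [hCdef, Matrix.transpose_sub, Matrix.transpose_one]
    have : C⁻¹ i j = Ring.inverse (1 - (τ • B)ᵀ) j i := by
      rw [← hT, ← Matrix.nonsing_inv_eq_ringInverse, ← Matrix.transpose_nonsing_inv]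
      rfl
    rw [this]
    exact key j i
  intro x hx
  have hCx : C.mulVec x = ℓ := by
    rw [hx, Matrix.mulVec_mulVec, hCC, Matrix.one_mulVec]
  have hxeq : ∀ i, x i = ℓ i + τ * ∑ j, B i j * x j := by
    intro i
    have := congrFun hCx i
    simp only [hCdef, Matrix.sub_mulVec, Matrix.one_mulVec, Pi.sub_apply] at this
    simp only [Matrix.mulVec, dotProduct, Matrix.smul_apply, smul_eq_mul,
      mul_assoc] at this
    rw [← Finset.mul_sum] at this
    linarith
  have hx0 : ∀ i, 0 ≤ x i := by
    intro i
    rw [hx]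
    show 0 ≤ ∑ j, C⁻¹ i j * ℓ j
    exact Finset.sum_nonneg fun j _ => mul_nonneg (hinvnn i j) (hℓ0 j)
  have hsumx : ∑ i, x i = 1 := by
    have h1 : ∑ i, x i = (1 - τ) + τ * ∑ j, x j := by
      calc ∑ i, x i = ∑ i, (ℓ i + τ * ∑ j, B i j * x j) :=
            Finset.sum_congr rfl fun i _ => hxeq i
        _ = ∑ i, ℓ i + τ * ∑ i, ∑ j, B i j * x j := by
            rw [Finset.sum_add_distrib, Finset.mul_sum]
        _ = (1 - τ) + τ * ∑ j, x j := by
            rw [Finset.sum_comm]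
            have : ∀ j, ∑ i, B i j * x j = x j := by
              intro j
              rw [← Finset.sum_mul, hBstoch j, one_mul]
            rw [Finset.sum_congr rfl fun j _ => this j]
            ring_nf
            linarith [hτdef]
    have hne : (1:ℝ) - τ ≠ 0 := by linarith
    have : (1 - τ) * (∑ i, x i) = (1 - τ) * 1 := by ring_nf; ring_nf at h1; linarith
    exact mul_left_cancel₀ hne this
  refine ⟨hx0, hsumx, ?_⟩
  funext i
  have hAij : ∀ j, A i j = τ * B i j + ℓ i := by
    intro j
    have := hτB i j
    linarith [this]
  calc (A.mulVec x) i = ∑ j, A i j * x j := rfl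
    _ = ∑ j, (τ * B i j + ℓ i) * x j := Finset.sum_congr rfl fun j _ => by rw [hAij j]
    _ = τ * ∑ j, B i j * x j + ℓ i * ∑ j, x j := by
        rw [Finset.mul_sum, Finset.mul_sum, ← Finset.sum_add_distrib]
        exact Finset.sum_congr rfl fun j _ => by ring
    _ = x i := by rw [hsumx, mul_one]; linarith [hxeq i]
end

section
/- Let A be a column stochastic nonnegative matrix with τ = τ_{n−1}(A) < 1 and B column stochastic with τB = A − ℓeᵀ, ℓ_i = min_j a_{ij}. Then the Neumann series x = Σ_{k≥0} τ^k B^k ℓ converges, is nonnegative, and satisfies eᵀx = 1. -/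
/-- Let `A` be column stochastic nonnegative with `τ = τ_{n-1}(A) < 1`,
`ℓ i = min_j A i j`, and `B` column stochastic with `τ • B = A - ℓ eᵀ`.
Then the Neumann series `x = ∑_{k ≥ 0} τ^k B^k ℓ` converges, is nonnegative,
and satisfies `eᵀ x = 1`. -/
theorem stmt_13 (n : ℕ) [NeZero n] (A B : Matrix (Fin n) (Fin n) ℝ)
    (hA : ∀ i j, 0 ≤ A i j) (hstoch : ∀ j, ∑ i, A i j = 1)
    (hτlt : 1 - ∑ i, Finset.univ.inf' Finset.univ_nonempty (fun j => A i j) < 1)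
    (hB : ∀ i j, 0 ≤ B i j) (hBstoch : ∀ j, ∑ i, B i j = 1)
    (hτB : ∀ i j,
      (1 - ∑ i', Finset.univ.inf' Finset.univ_nonempty (fun j' => A i' j')) * B i j
        = A i j - Finset.univ.inf' Finset.univ_nonempty (fun j' => A i j')) :
    ∃ x : Fin n → ℝ,
      HasSum (fun k : ℕ =>
        (1 - ∑ i', Finset.univ.inf' Finset.univ_nonempty (fun j' => A i' j')) ^ k •
          (B ^ k).mulVec (fun i => Finset.univ.inf' Finset.univ_nonempty (fun j' => A i j'))) x ∧
      (∀ i, 0 ≤ x i) ∧ ∑ i, x i = 1 := by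
  set ℓ : Fin n → ℝ := fun i => Finset.univ.inf' Finset.univ_nonempty (fun j' => A i j') with hℓ
  set τ : ℝ := 1 - ∑ i', ℓ i' with hτ
  -- basic facts
  have hℓ0 : ∀ i, 0 ≤ ℓ i := fun i =>
    Finset.le_inf' _ _ (fun j _ => hA i j)
  have hℓsum : ∑ i, ℓ i ≤ 1 := by
    calc ∑ i, ℓ i ≤ ∑ i, A i 0 := Finset.sum_le_sum fun i _ =>
          Finset.inf'_le _ (Finset.mem_univ 0)
      _ = 1 := hstoch 0
  have hτ0 : 0 ≤ τ := by simp [hτ]; linarith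
  have hτ1 : τ < 1 := hτlt
  -- column sums preserved by B
  have hpres : ∀ v : Fin n → ℝ, ∑ i, B.mulVec v i = ∑ i, v i := by
    intro v
    simp only [Matrix.mulVec, dotProduct]
    rw [Finset.sum_comm]
    refine Finset.sum_congr rfl fun j _ => ?_
    rw [← Finset.sum_mul, hBstoch j, one_mul]
  have hcol : ∀ k : ℕ, ∑ i, (B ^ k).mulVec ℓ i = ∑ i, ℓ i := by
    intro k
    induction k with
    | zero => simp
    | succ k ih =>
      rw [pow_succ', ← Matrix.mulVec_mulVec, hpres, ih]
  -- nonnegativity of B^k entries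
  have hBk : ∀ (k : ℕ) i j, 0 ≤ (B ^ k) i j := by
    intro k
    induction k with
    | zero => intro i j; by_cases h : i = j <;> simp [Matrix.one_apply, h]
    | succ k ih =>
      intro i j
      rw [pow_succ, Matrix.mul_apply]
      exact Finset.sum_nonneg fun m _ => mul_nonneg (ih i m) (hB m j)
  have hterm0 : ∀ (k : ℕ) i, 0 ≤ τ ^ k * (B ^ k).mulVec ℓ i := by
    intro k i
    refine mul_nonneg (pow_nonneg hτ0 k) ?_
    simp only [Matrix.mulVec, dotProduct]
    exact Finset.sum_nonneg fun j _ => mul_nonneg (hBk k i j) (hℓ0 j)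
  have htermle : ∀ (k : ℕ) i, τ ^ k * (B ^ k).mulVec ℓ i ≤ τ ^ k * (1 - τ) := by
    intro k i
    have h1 : (B ^ k).mulVec ℓ i ≤ ∑ i', (B ^ k).mulVec ℓ i' :=
      Finset.single_le_sum (f := fun i' => (B ^ k).mulVec ℓ i')
        (fun i' _ => by
          simp only [Matrix.mulVec, dotProduct]
          exact Finset.sum_nonneg fun j _ => mul_nonneg (hBk k i' j) (hℓ0 j))
        (Finset.mem_univ i)
    have h2 : (B ^ k).mulVec ℓ i ≤ 1 - τ := by
      rw [hcol k] at h1; simp [hτ]; linarith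
    exact mul_le_mul_of_nonneg_left h2 (pow_nonneg hτ0 k)
  -- summability
  have hgeo : Summable (fun k : ℕ => τ ^ k * (1 - τ)) :=
    (summable_geometric_of_lt_one hτ0 hτ1).mul_right _
  have hsummable : ∀ i, Summable (fun k : ℕ => τ ^ k * (B ^ k).mulVec ℓ i) := by
    intro i
    exact Summable.of_nonneg_of_le (fun k => hterm0 k i) (fun k => htermle k i) hgeo
  refine ⟨fun i => ∑' k, τ ^ k * (B ^ k).mulVec ℓ i, ?_, ?_, ?_⟩
  · rw [Pi.hasSum]
    intro i
    simpa using (hsummable i).hasSum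
  · intro i
    exact tsum_nonneg fun k => hterm0 k i
  · rw [← Summable.tsum_finsetSum (fun i _ => hsummable i)]
    have : ∀ k : ℕ, ∑ i, τ ^ k * (B ^ k).mulVec ℓ i = τ ^ k * (1 - τ) := by
      intro k
      rw [← Finset.mul_sum, hcol k, hτ]
      ring
    rw [tsum_congr this, tsum_mul_right, tsum_geometric_of_lt_one hτ0 hτ1]
    rw [inv_mul_cancel₀ (by linarith : (1:ℝ) - τ ≠ 0)]
end

section
/- Let A ∈ M_n(ℂ), ν ⊆ λ(A), W_ν the matrix of generalized Jordan eigenvectors for the eigenvalues in ν, and for a norm ‖·‖ define φ(W_ν, M) = max{‖x* M‖ : ‖x‖ ≤ 1, W_ν* x = 0}. Then ρ(ν̄) = lim_{k→∞} φ(W_ν, A^k)^{1/k}, where ρ(ν̄) is the maximum modulus of eigenvalues of A not in ν. -/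
open Matrix Filter


attribute [local instance] Matrix.linftyOpNormedAddCommGroup Matrix.linftyOpNormedRing
  Matrix.linftyOpNormedAlgebra

noncomputable section Stmt16Aux

private def NCopy (n : ℕ) : Type := Fin n → ℂ

private instance (n : ℕ) : AddCommGroup (NCopy n) := inferInstanceAs (AddCommGroup (Fin n → ℂ))
private instance (n : ℕ) : Module ℂ (NCopy n) := inferInstanceAs (Module ℂ (Fin n → ℂ))
private instance (n : ℕ) : FiniteDimensional ℂ (NCopy n) :=
  inferInstanceAs (FiniteDimensional ℂ (Fin n → ℂ))

private theorem stmt16_norm_equiv (n : ℕ) (N : (Fin n → ℂ) → ℝ)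
    (hN0 : ∀ x, N x = 0 ↔ x = 0)
    (hNh : ∀ (a : ℂ) x, N (a • x) = ‖a‖ * N x)
    (hNt : ∀ x y, N (x + y) ≤ N x + N y) :
    ∃ c C : ℝ, 0 < c ∧ 0 < C ∧ (∀ x, c * ‖x‖ ≤ N x) ∧ (∀ x, N x ≤ C * ‖x‖) := by
  letI : NormedAddCommGroup (NCopy n) := AddGroupNorm.toNormedAddCommGroup
    { toFun := N
      map_zero' := (hN0 0).mpr rfl
      add_le' := hNt
      neg' := fun x => by
        have h := hNh (-1) x
        rw [norm_neg, norm_one, one_mul] at h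
        rw [← h]; exact congrArg N (neg_one_smul ℂ (show Fin n → ℂ from x)).symm
      eq_zero_of_map_eq_zero' := fun x hx => (hN0 x).mp hx }
  letI : NormedSpace ℂ (NCopy n) :=
    ⟨fun a x => le_of_eq (by exact hNh a x)⟩
  have hnorm : ∀ x : NCopy n, ‖x‖ = N x := fun _ => rfl
  let f : NCopy n →ₗ[ℂ] (Fin n → ℂ) :=
    { toFun := fun x => x, map_add' := fun _ _ => rfl, map_smul' := fun _ _ => rfl }
  let g : (Fin n → ℂ) →ₗ[ℂ] NCopy n :=
    { toFun := fun x => x, map_add' := fun _ _ => rfl, map_smul' := fun _ _ => rfl }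
  let F : NCopy n →L[ℂ] (Fin n → ℂ) := ⟨f, f.continuous_of_finiteDimensional⟩
  let G : (Fin n → ℂ) →L[ℂ] NCopy n := ⟨g, g.continuous_of_finiteDimensional⟩
  refine ⟨(max ‖F‖ 1)⁻¹, max ‖G‖ 1, by positivity, by positivity, fun x => ?_, fun x => ?_⟩
  · rw [inv_mul_le_iff₀ (by positivity)]
    calc ‖x‖ = ‖F (g x)‖ := rfl
      _ ≤ ‖F‖ * ‖g x‖ := F.le_opNorm _
      _ ≤ max ‖F‖ 1 * ‖g x‖ := by
          have := norm_nonneg (g x); gcongr; exact le_max_left _ _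
      _ = max ‖F‖ 1 * N x := rfl
  · calc N x = ‖g x‖ := (hnorm (g x)).symm
      _ = ‖G x‖ := rfl
      _ ≤ ‖G‖ * ‖x‖ := G.le_opNorm _
      _ ≤ max ‖G‖ 1 * ‖x‖ := by have := norm_nonneg x; gcongr; exact le_max_left _ _

private theorem stmt16_exists_vec (q : ℕ) (M : Matrix (Fin q) (Fin q) ℂ) :
    ∃ v : Fin q → ℂ, ‖v‖ ≤ 1 ∧ ‖M‖ ≤ ‖M *ᵥ v‖ := by
  rcases Nat.eq_zero_or_pos q with hq | hq
  · subst hq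
    refine ⟨0, by rw [pi_norm_le_iff_of_nonneg zero_le_one]; exact fun i => i.elim0, ?_⟩
    have : ‖M‖ = ((Finset.univ : Finset (Fin 0)).sup
        fun i => ∑ j, ‖M i j‖₊ : NNReal) := Matrix.linfty_opNorm_def M
    simp [this]
  · haveI : Nonempty (Fin q) := ⟨⟨0, hq⟩⟩
    obtain ⟨i₀, -, hi₀⟩ := Finset.exists_mem_eq_sup (Finset.univ : Finset (Fin q))
      Finset.univ_nonempty (fun i : Fin q => ∑ j, ‖M i j‖₊)
    set v : Fin q → ℂ := fun j =>
      if M i₀ j = 0 then 0 else (starRingEnd ℂ) (M i₀ j) / ((‖M i₀ j‖ : ℝ) : ℂ) with hv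
    have hvle : ∀ j, ‖v j‖ ≤ 1 := by
      intro j
      by_cases h : M i₀ j = 0
      · simp [hv, h]
      · simp only [hv, if_neg h]
        rw [norm_div]
        rw [div_le_one (by simpa using norm_pos_iff.mpr h)]
        simp
    have hvnorm : ‖v‖ ≤ 1 := by
      rw [pi_norm_le_iff_of_nonneg zero_le_one]; exact hvle
    refine ⟨v, hvnorm, ?_⟩
    have hMv : (M *ᵥ v) i₀ = ((∑ j, ‖M i₀ j‖ : ℝ) : ℂ) := by
      simp only [Matrix.mulVec, dotProduct]
      push_cast
      refine Finset.sum_congr rfl fun j _ => ?_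
      by_cases h : M i₀ j = 0
      · simp [hv, h]
      · simp only [hv, if_neg h]
        rw [mul_div_assoc']
        rw [Complex.mul_conj]
        rw [Complex.normSq_eq_norm_sq]
        rw [div_eq_iff (by exact_mod_cast (norm_ne_zero_iff.mpr h))]
        push_cast
        ring
    have h1 : ‖M‖ = ((∑ j, ‖M i₀ j‖₊ : NNReal) : ℝ) := by
      rw [Matrix.linfty_opNorm_def, hi₀]
    rw [h1]
    calc ((∑ j, ‖M i₀ j‖₊ : NNReal) : ℝ) = ∑ j, ‖M i₀ j‖ := by
          simp [NNReal.coe_sum]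
      _ = ‖(M *ᵥ v) i₀‖ := by
            rw [hMv, Complex.norm_real, Real.norm_eq_abs,
              abs_of_nonneg (Finset.sum_nonneg fun j _ => norm_nonneg _)]
      _ ≤ ‖M *ᵥ v‖ := norm_le_pi_norm _ i₀

private theorem stmt16_spectrum_transpose (q : ℕ) (M : Matrix (Fin q) (Fin q) ℂ) :
    spectrum ℂ Mᵀ = spectrum ℂ M := by
  ext z
  simp only [spectrum.mem_iff, not_iff_not]
  have h : algebraMap ℂ (Matrix (Fin q) (Fin q) ℂ) z - Mᵀ
      = (algebraMap ℂ (Matrix (Fin q) (Fin q) ℂ) z - M)ᵀ := by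
    rw [Matrix.transpose_sub]
    congr 1
    rw [Matrix.algebraMap_eq_diagonal, Matrix.diagonal_transpose]
  rw [h, Matrix.isUnit_iff_isUnit_det, Matrix.det_transpose, ← Matrix.isUnit_iff_isUnit_det]

private theorem stmt16_gelfand (q : ℕ) (B : Matrix (Fin q) (Fin q) ℂ)
    (σ : Set ℂ) (hσ : spectrum ℂ B = σ) (hne : σ.Nonempty) :
    Filter.Tendsto (fun k : ℕ => ‖B ^ k‖ ^ ((k : ℝ)⁻¹)) atTop
      (nhds (sSup ((fun z : ℂ => ‖z‖) '' σ))) := by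
  haveI : CompleteSpace (Matrix (Fin q) (Fin q) ℂ) := FiniteDimensional.complete ℂ _
  have hcpt : IsCompact σ := hσ ▸ spectrum.isCompact (𝕜 := ℂ) B
  have hKcpt : IsCompact ((fun z : ℂ => ‖z‖) '' σ) := hcpt.image continuous_norm
  have hKne : ((fun z : ℂ => ‖z‖) '' σ).Nonempty := hne.image _
  set R : ℝ := sSup ((fun z : ℂ => ‖z‖) '' σ) with hR
  have hRmem : R ∈ (fun z : ℂ => ‖z‖) '' σ := hKcpt.sSup_mem hKne
  obtain ⟨z₀, hz₀, hz₀R⟩ := hRmem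
  have hR0 : 0 ≤ R := hz₀R ▸ norm_nonneg z₀
  have hL : spectralRadius ℂ B = ENNReal.ofReal R := by
    apply le_antisymm
    · refine iSup₂_le fun z hz => ?_
      rw [hσ] at hz
      have hzR : ‖z‖ ≤ R :=
        le_csSup hKcpt.bddAbove ⟨z, hz, rfl⟩
      calc (‖z‖₊ : ENNReal) = ENNReal.ofReal ‖z‖ := (ofReal_norm z).symm
        _ ≤ ENNReal.ofReal R := ENNReal.ofReal_le_ofReal hzR
    · have : ENNReal.ofReal R = (‖z₀‖₊ : ENNReal) := by
        rw [← hz₀R]; exact ofReal_norm z₀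
      rw [this]
      have hz₀' : z₀ ∈ spectrum ℂ B := hσ ▸ hz₀
      exact le_iSup₂ (f := fun z (_ : z ∈ spectrum ℂ B) => (‖z‖₊ : ENNReal)) z₀ hz₀'
  have hG := spectrum.pow_nnnorm_pow_one_div_tendsto_nhds_spectralRadius B
  rw [hL] at hG
  have hG2 : Filter.Tendsto (fun k : ℕ => ((‖B ^ k‖₊ : ENNReal) ^ (1 / (k : ℝ))).toReal)
      atTop (nhds (ENNReal.ofReal R).toReal) :=
    (ENNReal.tendsto_toReal ENNReal.ofReal_ne_top).comp hG
  rw [ENNReal.toReal_ofReal hR0] at hG2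
  convert hG2 using 2 with k
  rw [← ENNReal.toReal_rpow, ENNReal.coe_toReal, coe_nnnorm, one_div]

private theorem stmt16_rpow_tendsto_one (c : ℝ) (hc : 0 < c) :
    Filter.Tendsto (fun k : ℕ => c ^ ((k : ℝ)⁻¹)) atTop (nhds 1) := by
  have h2 : Filter.Tendsto (fun k : ℕ => Real.log c * (k : ℝ)⁻¹) atTop (nhds 0) := by
    have h3 := tendsto_inv_atTop_zero.comp (tendsto_natCast_atTop_atTop (R := ℝ))
    simpa using h3.const_mul (Real.log c)
  have h4 := (Real.continuous_exp.tendsto 0).comp h2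
  simp only [Function.comp_def, Real.exp_zero] at h4
  refine h4.congr fun k => ?_
  rw [Real.rpow_def_of_pos hc]

end Stmt16Aux

set_option maxHeartbeats 1000000 in
/-- Let `A ∈ M_n(ℂ)` with Jordan-type block decomposition as below, `ν̄` nonempty,
and for a norm `N` set `φ(W, M) = max {N (x* M) : N x ≤ 1, W* x = 0}`.  Then
`ρ(ν̄) = lim_k φ(W, Aᵏ)^{1/k}`. -/
theorem stmt_16 (n p q : ℕ) (A : Matrix (Fin n) (Fin n) ℂ) (ν : Set ℂ)
    (hν : ν ⊆ spectrum ℂ A) (hνbar : (spectrum ℂ A \ ν).Nonempty)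
    (W : Matrix (Fin n) (Fin p) ℂ) (W' : Matrix (Fin n) (Fin q) ℂ)
    (J1 : Matrix (Fin p) (Fin p) ℂ) (J2 : Matrix (Fin q) (Fin q) ℂ)
    (hX : ∃ Y : Matrix (Fin p ⊕ Fin q) (Fin n) ℂ,
      Matrix.fromCols W W' * Y = 1 ∧ Y * Matrix.fromCols W W' = 1)
    (hAX : A * Matrix.fromCols W W'
      = Matrix.fromCols W W' * Matrix.fromBlocks J1 0 0 J2)
    (hJ1 : spectrum ℂ J1 = ν) (hJ2 : spectrum ℂ J2 = spectrum ℂ A \ ν)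
    (N : (Fin n → ℂ) → ℝ)
    (hN0 : ∀ x, N x = 0 ↔ x = 0)
    (hNh : ∀ (a : ℂ) x, N (a • x) = ‖a‖ * N x)
    (hNt : ∀ x y, N (x + y) ≤ N x + N y) :
    Filter.Tendsto (fun k : ℕ =>
      (sSup {r : ℝ | ∃ x : Fin n → ℂ, N x ≤ 1 ∧ W.conjTranspose.mulVec x = 0 ∧
        r = N (Matrix.vecMul (star x) (A ^ k))}) ^ ((k : ℝ)⁻¹))
      Filter.atTop (nhds (sSup ((fun z : ℂ => ‖z‖) '' (spectrum ℂ A \ ν)))) := by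
  obtain ⟨Y, hXY, hYX⟩ := hX
  set X := Matrix.fromCols W W' with hXdef
  set D := Matrix.fromBlocks J1 0 0 J2 with hDdef
  set Y₂ := Y.toRows₂ with hY₂def
  -- q is positive
  have hq : 0 < q := by
    rcases Nat.eq_zero_or_pos q with h | h
    · exfalso
      subst h
      haveI : Subsingleton (Matrix (Fin 0) (Fin 0) ℂ) :=
        ⟨fun a b => by ext i j; exact i.elim0⟩
      have hemp : spectrum ℂ J2 = ∅ := by
        ext z; simp [spectrum.mem_iff, isUnit_of_subsingleton]
      obtain ⟨z, hz⟩ := hνbar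
      rw [← hJ2, hemp] at hz
      exact hz
    · exact h
  haveI : Nonempty (Fin q) := ⟨⟨0, hq⟩⟩
  -- block identities
  have hY₂W : Y₂ * W = 0 := by
    ext i j
    have h : (Y * X) (Sum.inr i) (Sum.inl j)
        = (1 : Matrix (Fin p ⊕ Fin q) (Fin p ⊕ Fin q) ℂ) (Sum.inr i) (Sum.inl j) := by
      rw [hYX]
    simpa [Matrix.mul_apply, hXdef, Matrix.fromCols, Matrix.one_apply, hY₂def] using h
  have hY₂W' : Y₂ * W' = 1 := by
    ext i j
    have h : (Y * X) (Sum.inr i) (Sum.inr j)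
        = (1 : Matrix (Fin p ⊕ Fin q) (Fin p ⊕ Fin q) ℂ) (Sum.inr i) (Sum.inr j) := by
      rw [hYX]
    simpa [Matrix.mul_apply, hXdef, Matrix.fromCols, Matrix.one_apply, hY₂def] using h
  have hYA : Y * A = D * Y := by
    calc Y * A = Y * A * (X * Y) := by rw [hXY, Matrix.mul_one]
      _ = Y * (A * X) * Y := by rw [← Matrix.mul_assoc, Matrix.mul_assoc Y A X]
      _ = Y * (X * D) * Y := by rw [hAX]
      _ = (Y * X) * D * Y := by rw [← Matrix.mul_assoc]
      _ = D * Y := by rw [hYX, Matrix.one_mul]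
  have hYAk : ∀ k : ℕ, Y * A ^ k = D ^ k * Y := by
    intro k
    induction k with
    | zero => simp
    | succ k ih =>
        rw [pow_succ, pow_succ, ← Matrix.mul_assoc, ih, Matrix.mul_assoc, hYA,
          ← Matrix.mul_assoc]
  have hDk : ∀ k : ℕ, D ^ k = Matrix.fromBlocks (J1 ^ k) 0 0 (J2 ^ k) := by
    intro k
    induction k with
    | zero => simp [Matrix.fromBlocks_one]
    | succ k ih =>
        rw [pow_succ, pow_succ, pow_succ, ih, hDdef, Matrix.fromBlocks_multiply]
        simp
  have hY₂Ak : ∀ k : ℕ, Y₂ * A ^ k = J2 ^ k * Y₂ := by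
    intro k
    have h1 : Y₂ * A ^ k = (Y * A ^ k).toRows₂ := by
      ext i j; simp [Matrix.mul_apply, Matrix.toRows₂, hY₂def]
    rw [h1, hYAk k, hDk k]
    conv_lhs => rw [← Matrix.fromRows_toRows Y]
    rw [Matrix.fromBlocks_mul_fromRows]
    ext i j
    simp [hY₂def]
  -- the key identity for feasible x
  have key : ∀ (k : ℕ) (x : Fin n → ℂ), W.conjTranspose.mulVec x = 0 →
      Matrix.vecMul (star x) (A ^ k) = ((star x ᵥ* W') ᵥ* J2 ^ k) ᵥ* Y₂ := by
    intro k x hx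
    have hxW : star x ᵥ* W = 0 := by
      have h := congrArg star hx
      rwa [Matrix.star_mulVec, Matrix.conjTranspose_conjTranspose, star_zero] at h
    have hx1 : star x = (star x ᵥ* W') ᵥ* Y₂ := by
      have h0 : star x ᵥ* X ᵥ* Y = star x := by
        rw [Matrix.vecMul_vecMul, hXY, Matrix.vecMul_one]
      rw [hXdef, Matrix.vecMul_fromCols, hxW] at h0
      rw [← Matrix.fromRows_toRows Y, Matrix.sumElim_vecMul_fromRows,
        Matrix.zero_vecMul, zero_add] at h0
      exact h0.symm
    conv_lhs => rw [hx1]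
    simp only [Matrix.vecMul_vecMul]
    rw [Matrix.mul_assoc, hY₂Ak k, ← Matrix.mul_assoc]
  -- norms
  obtain ⟨c, C, hc, hC, hcN, hNC⟩ := stmt16_norm_equiv n N hN0 hNh hNt
  have hNnonneg : ∀ x, 0 ≤ N x := fun x =>
    le_trans (mul_nonneg hc.le (norm_nonneg x)) (hcN x)
  set B := J2ᵀ with hBdef
  have hvm : ∀ {a b : ℕ} (M : Matrix (Fin a) (Fin b) ℂ) (u : Fin a → ℂ),
      ‖u ᵥ* M‖ ≤ ‖Mᵀ‖ * ‖u‖ := by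
    intro a b M u
    rw [← Matrix.mulVec_transpose]
    exact Matrix.linfty_opNorm_mulVec _ _
  have hstar : ∀ x : Fin n → ℂ, ‖star x‖ = ‖x‖ := fun x => by
    simp [Pi.norm_def, Pi.nnnorm_def]
  have hW'pos : 0 < ‖W'ᵀ‖ := by
    rw [norm_pos_iff]
    intro h
    have h2 : W' = 0 := by
      have := congrArg Matrix.transpose h
      simpa using this
    rw [h2, Matrix.mul_zero] at hY₂W'
    have h3 := congrFun (congrFun hY₂W' ⟨0, hq⟩) ⟨0, hq⟩
    simp [Matrix.one_apply] at h3
  have hY₂pos : 0 < ‖Y₂ᵀ‖ := by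
    rw [norm_pos_iff]
    intro h
    have h2 : Y₂ = 0 := by
      have := congrArg Matrix.transpose h
      simpa using this
    rw [h2, Matrix.zero_mul] at hY₂W'
    have h3 := congrFun (congrFun hY₂W' ⟨0, hq⟩) ⟨0, hq⟩
    simp [Matrix.one_apply] at h3
  set S : ℕ → Set ℝ := fun k => {r : ℝ | ∃ x : Fin n → ℂ, N x ≤ 1 ∧
      W.conjTranspose.mulVec x = 0 ∧ r = N (Matrix.vecMul (star x) (A ^ k))} with hSdef
  set c₂ : ℝ := C * ‖Y₂ᵀ‖ * ‖W'ᵀ‖ / c with hc₂def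
  set c₁ : ℝ := c / (C * ‖Y₂ᵀ‖ * ‖W'ᵀ‖) with hc₁def
  have hc₂pos : 0 < c₂ := by
    rw [hc₂def]
    exact div_pos (mul_pos (mul_pos hC hY₂pos) hW'pos) hc
  have hc₁pos : 0 < c₁ := by
    rw [hc₁def]
    exact div_pos hc (mul_pos (mul_pos hC hY₂pos) hW'pos)
  -- upper bound for elements of S k
  have hub : ∀ k : ℕ, ∀ r ∈ S k, r ≤ c₂ * ‖B ^ k‖ := by
    rintro k r ⟨x, hx1, hx2, rfl⟩
    set v := star x ᵥ* W' with hvdef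
    rw [key k x hx2]
    have hxn : ‖x‖ ≤ c⁻¹ := by
      rw [← one_div, le_div_iff₀ hc]
      calc ‖x‖ * c = c * ‖x‖ := by ring
        _ ≤ N x := hcN x
        _ ≤ 1 := hx1
    have e1 : N ((v ᵥ* J2 ^ k) ᵥ* Y₂) ≤ C * ‖(v ᵥ* J2 ^ k) ᵥ* Y₂‖ := hNC _
    have e2 : ‖(v ᵥ* J2 ^ k) ᵥ* Y₂‖ ≤ ‖Y₂ᵀ‖ * ‖v ᵥ* J2 ^ k‖ := hvm _ _
    have e3 : ‖v ᵥ* J2 ^ k‖ ≤ ‖B ^ k‖ * ‖v‖ := by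
      rw [← Matrix.mulVec_transpose, Matrix.transpose_pow, ← hBdef]
      exact Matrix.linfty_opNorm_mulVec _ _
    have e4 : ‖v‖ ≤ ‖W'ᵀ‖ * c⁻¹ := by
      calc ‖v‖ ≤ ‖W'ᵀ‖ * ‖star x‖ := hvm _ _
        _ = ‖W'ᵀ‖ * ‖x‖ := by rw [hstar]
        _ ≤ ‖W'ᵀ‖ * c⁻¹ := mul_le_mul_of_nonneg_left hxn (norm_nonneg _)
    calc N ((v ᵥ* J2 ^ k) ᵥ* Y₂) ≤ C * ‖(v ᵥ* J2 ^ k) ᵥ* Y₂‖ := e1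
      _ ≤ C * (‖Y₂ᵀ‖ * ‖v ᵥ* J2 ^ k‖) := mul_le_mul_of_nonneg_left e2 hC.le
      _ ≤ C * (‖Y₂ᵀ‖ * (‖B ^ k‖ * ‖v‖)) := by
          refine mul_le_mul_of_nonneg_left ?_ hC.le
          exact mul_le_mul_of_nonneg_left e3 (norm_nonneg _)
      _ ≤ C * (‖Y₂ᵀ‖ * (‖B ^ k‖ * (‖W'ᵀ‖ * c⁻¹))) := by
          refine mul_le_mul_of_nonneg_left ?_ hC.le
          refine mul_le_mul_of_nonneg_left ?_ (norm_nonneg _)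
          exact mul_le_mul_of_nonneg_left e4 (norm_nonneg _)
      _ = c₂ * ‖B ^ k‖ := by rw [hc₂def]; field_simp
  have h0mem : ∀ k : ℕ, (0 : ℝ) ∈ S k := by
    intro k
    refine ⟨0, le_of_eq ((hN0 0).mpr rfl) |>.trans zero_le_one, by simp, ?_⟩
    rw [star_zero, Matrix.zero_vecMul, (hN0 0).mpr rfl]
  have hbdd : ∀ k : ℕ, BddAbove (S k) := fun k => ⟨c₂ * ‖B ^ k‖, fun r hr => hub k r hr⟩
  have hSnonneg : ∀ k : ℕ, 0 ≤ sSup (S k) := fun k => le_csSup (hbdd k) (h0mem k)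
  have hφub : ∀ k : ℕ, sSup (S k) ≤ c₂ * ‖B ^ k‖ := fun k =>
    Real.sSup_le (hub k) (mul_nonneg hc₂pos.le (norm_nonneg _))
  -- lower bound
  have hlb : ∀ k : ℕ, c₁ * ‖B ^ k‖ ≤ sSup (S k) := by
    intro k
    rcases eq_or_ne ‖B ^ k‖ 0 with h0 | h0
    · rw [h0, mul_zero]; exact hSnonneg k
    · obtain ⟨v, hv1, hv2⟩ := stmt16_exists_vec q (B ^ k)
      have hv0 : v ≠ 0 := by
        rintro rfl
        rw [Matrix.mulVec_zero, norm_zero] at hv2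
        exact h0 (le_antisymm hv2 (norm_nonneg _))
      set y := v ᵥ* Y₂ with hydef
      have hyW' : y ᵥ* W' = v := by
        rw [hydef, Matrix.vecMul_vecMul, hY₂W', Matrix.vecMul_one]
      have hy0 : y ≠ 0 := fun h => hv0 (by rw [← hyW', h, Matrix.zero_vecMul])
      set t := N (star y) with htdef
      have hstary0 : (star y : Fin n → ℂ) ≠ 0 := fun h => hy0 (by
        have := congrArg star h
        rwa [star_star, star_zero] at this)
      have ht : 0 < t := lt_of_le_of_ne (hNnonneg _) (Ne.symm (fun h => hstary0 ((hN0 _).mp h)))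
      set x : Fin n → ℂ := ((t : ℂ))⁻¹ • star y with hxdef
      have habs : ‖((t : ℂ))⁻¹‖ = t⁻¹ := by
        rw [norm_inv, Complex.norm_real, Real.norm_eq_abs, abs_of_pos ht]
      have hNx : N x = 1 := by
        rw [hxdef, hNh, habs, ← htdef, inv_mul_cancel₀ ht.ne']
      have hstarx : star x = ((t : ℂ))⁻¹ • y := by
        rw [hxdef, star_smul, star_star, star_inv₀, Complex.star_def, Complex.conj_ofReal]
      have hxW : W.conjTranspose.mulVec x = 0 := by
        rw [Matrix.mulVec_conjTranspose, hstarx, Matrix.smul_vecMul, hydef,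
          Matrix.vecMul_vecMul, hY₂W, Matrix.vecMul_zero, smul_zero, star_zero]
      have hmem : N (Matrix.vecMul (star x) (A ^ k)) ∈ S k := ⟨x, hNx.le, hxW, rfl⟩
      have hle := le_csSup (hbdd k) hmem
      refine le_trans ?_ hle
      -- compute the value
      set u := v ᵥ* J2 ^ k with hudef
      have hxW' : star x ᵥ* W' = ((t : ℂ))⁻¹ • v := by
        rw [hstarx, Matrix.smul_vecMul, hyW']
      have hval : N (Matrix.vecMul (star x) (A ^ k)) = t⁻¹ * N (u ᵥ* Y₂) := by
        rw [key k x hxW, hxW', Matrix.smul_vecMul, Matrix.smul_vecMul, ← hudef, hNh, habs]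
      rw [hval]
      have hu : u = B ^ k *ᵥ v := by
        rw [hudef, ← Matrix.mulVec_transpose, Matrix.transpose_pow, ← hBdef]
      have s1 : ‖B ^ k‖ ≤ ‖u‖ := by rw [hu]; exact hv2
      have s2 : ‖u‖ ≤ ‖W'ᵀ‖ * ‖u ᵥ* Y₂‖ := by
        have h5 : (u ᵥ* Y₂) ᵥ* W' = u := by
          rw [Matrix.vecMul_vecMul, hY₂W', Matrix.vecMul_one]
        calc ‖u‖ = ‖(u ᵥ* Y₂) ᵥ* W'‖ := by rw [h5]
          _ ≤ ‖W'ᵀ‖ * ‖u ᵥ* Y₂‖ := hvm _ _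
      have s3 : c * ‖u ᵥ* Y₂‖ ≤ N (u ᵥ* Y₂) := hcN _
      have hNu : c * ‖B ^ k‖ / ‖W'ᵀ‖ ≤ N (u ᵥ* Y₂) := by
        rw [div_le_iff₀ hW'pos]
        have s4 : c * ‖B ^ k‖ ≤ c * ‖u‖ := mul_le_mul_of_nonneg_left s1 hc.le
        have s5 : c * ‖u‖ ≤ c * (‖W'ᵀ‖ * ‖u ᵥ* Y₂‖) := mul_le_mul_of_nonneg_left s2 hc.le
        have s7 : ‖W'ᵀ‖ * (c * ‖u ᵥ* Y₂‖) ≤ ‖W'ᵀ‖ * N (u ᵥ* Y₂) :=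
          mul_le_mul_of_nonneg_left s3 (norm_nonneg _)
        have s6 : c * (‖W'ᵀ‖ * ‖u ᵥ* Y₂‖) = ‖W'ᵀ‖ * (c * ‖u ᵥ* Y₂‖) := by ring
        linarith
      have htle : t ≤ C * ‖Y₂ᵀ‖ := by
        calc t ≤ C * ‖star y‖ := hNC _
          _ = C * ‖y‖ := by rw [hstar]
          _ = C * ‖v ᵥ* Y₂‖ := by rw [hydef]
          _ ≤ C * (‖Y₂ᵀ‖ * ‖v‖) := mul_le_mul_of_nonneg_left (hvm _ _) hC.le
          _ ≤ C * (‖Y₂ᵀ‖ * 1) := by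
              refine mul_le_mul_of_nonneg_left ?_ hC.le
              exact mul_le_mul_of_nonneg_left hv1 (norm_nonneg _)
          _ = C * ‖Y₂ᵀ‖ := by ring
      have htinv : (C * ‖Y₂ᵀ‖)⁻¹ ≤ t⁻¹ :=
        inv_anti₀ ht htle
      calc c₁ * ‖B ^ k‖ = (C * ‖Y₂ᵀ‖)⁻¹ * (c * ‖B ^ k‖ / ‖W'ᵀ‖) := by
            rw [hc₁def]; field_simp
        _ ≤ t⁻¹ * N (u ᵥ* Y₂) := by
            refine mul_le_mul htinv hNu ?_ (inv_nonneg.mpr ht.le)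
            exact div_nonneg (mul_nonneg hc.le (norm_nonneg _)) hW'pos.le
  -- conclude via squeeze
  have hBlim := stmt16_gelfand q B (spectrum ℂ A \ ν)
    (by rw [hBdef, stmt16_spectrum_transpose, hJ2]) hνbar
  have hlow : Filter.Tendsto (fun k : ℕ => c₁ ^ ((k : ℝ)⁻¹) * ‖B ^ k‖ ^ ((k : ℝ)⁻¹))
      atTop (nhds (sSup ((fun z : ℂ => ‖z‖) '' (spectrum ℂ A \ ν)))) := by
    have := (stmt16_rpow_tendsto_one c₁ hc₁pos).mul hBlim
    rwa [one_mul] at this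
  have hhigh : Filter.Tendsto (fun k : ℕ => c₂ ^ ((k : ℝ)⁻¹) * ‖B ^ k‖ ^ ((k : ℝ)⁻¹))
      atTop (nhds (sSup ((fun z : ℂ => ‖z‖) '' (spectrum ℂ A \ ν)))) := by
    have := (stmt16_rpow_tendsto_one c₂ hc₂pos).mul hBlim
    rwa [one_mul] at this
  refine tendsto_of_tendsto_of_tendsto_of_le_of_le hlow hhigh ?_ ?_
  · intro k
    have he : (0 : ℝ) ≤ (k : ℝ)⁻¹ := inv_nonneg.mpr (Nat.cast_nonneg k)
    calc c₁ ^ ((k : ℝ)⁻¹) * ‖B ^ k‖ ^ ((k : ℝ)⁻¹)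
        = (c₁ * ‖B ^ k‖) ^ ((k : ℝ)⁻¹) :=
          (Real.mul_rpow hc₁pos.le (norm_nonneg _)).symm
      _ ≤ (sSup (S k)) ^ ((k : ℝ)⁻¹) :=
          Real.rpow_le_rpow (mul_nonneg hc₁pos.le (norm_nonneg _)) (hlb k) he
  · intro k
    have he : (0 : ℝ) ≤ (k : ℝ)⁻¹ := inv_nonneg.mpr (Nat.cast_nonneg k)
    calc (sSup (S k)) ^ ((k : ℝ)⁻¹)
        ≤ (c₂ * ‖B ^ k‖) ^ ((k : ℝ)⁻¹) :=
          Real.rpow_le_rpow (hSnonneg k) (hφub k) he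
      _ = c₂ ^ ((k : ℝ)⁻¹) * ‖B ^ k‖ ^ ((k : ℝ)⁻¹) :=
          Real.mul_rpow hc₂pos.le (norm_nonneg _)
end

section
/- Let A ∈ M_n(ℝ), ν ⊆ λ(A), and suppose w_1,...,w_p are real columns of W_ν; set W = [w_1 ... w_p]. With ‖x‖_□ = sup_α ‖Re(x)cos α + Im(x)sin α‖ for x ∈ ℂⁿ, one has max{‖x*A‖_□ : x ∈ ℂⁿ, ‖x‖_□ ≤ 1, Wᵀx = 0} = max{‖xᵀA‖ : x ∈ ℝⁿ, ‖x‖ ≤ 1, Wᵀx = 0}. -/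
open Matrix

private lemma cos_lip (a b : ℝ) : |Real.cos a - Real.cos b| ≤ |a - b| := by
  rw [Real.cos_sub_cos]
  have h1 : |Real.sin ((a + b) / 2)| ≤ 1 := Real.abs_sin_le_one _
  have h2 : |Real.sin ((a - b) / 2)| ≤ |(a - b) / 2| := Real.abs_sin_le_abs
  rw [abs_mul, abs_mul]
  have h3 : |(a - b) / 2| = |a - b| / 2 := by rw [abs_div]; norm_num
  have h0 : (0:ℝ) ≤ |Real.sin ((a - b) / 2)| := abs_nonneg _
  have h0' : (0:ℝ) ≤ |Real.sin ((a + b) / 2)| := abs_nonneg _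
  have key : |Real.sin ((a + b) / 2)| * |Real.sin ((a - b) / 2)| ≤ 1 * (|a - b| / 2) :=
    mul_le_mul h1 (h3 ▸ h2) h0 zero_le_one
  have h4 : |(-2 : ℝ)| = 2 := by norm_num
  rw [h4]
  nlinarith

private lemma sin_lip (a b : ℝ) : |Real.sin a - Real.sin b| ≤ |a - b| := by
  rw [Real.sin_sub_sin]
  have h1 : |Real.cos ((a + b) / 2)| ≤ 1 := Real.abs_cos_le_one _
  have h2 : |Real.sin ((a - b) / 2)| ≤ |(a - b) / 2| := Real.abs_sin_le_abs
  rw [abs_mul, abs_mul]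
  have h3 : |(a - b) / 2| = |a - b| / 2 := by rw [abs_div]; norm_num
  have h0 : (0:ℝ) ≤ |Real.sin ((a - b) / 2)| := abs_nonneg _
  have h0' : (0:ℝ) ≤ |Real.cos ((a + b) / 2)| := abs_nonneg _
  have key : |Real.sin ((a - b) / 2)| * |Real.cos ((a + b) / 2)| ≤ (|a - b| / 2) * 1 :=
    mul_le_mul (h3 ▸ h2) h1 h0' (by positivity)
  have h4 : |(2 : ℝ)| = 2 := by norm_num
  rw [h4]
  nlinarith

/-- Let `A ∈ M_n(ℝ)`, `W` a real `n × p` matrix (some real columns of `W_ν`),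
`N` a norm on `ℝⁿ` and `N□` the induced norm on `ℂⁿ`,
`N□ x = sup_α N (Re x · cos α + Im x · sin α)`.  Then
`max {N□ (x* A) : x ∈ ℂⁿ, N□ x ≤ 1, Wᵀ x = 0}
  = max {N (xᵀ A) : x ∈ ℝⁿ, N x ≤ 1, Wᵀ x = 0}`. -/
theorem stmt_18 (n p : ℕ) (A : Matrix (Fin n) (Fin n) ℝ)
    (W : Matrix (Fin n) (Fin p) ℝ)
    (N : (Fin n → ℝ) → ℝ)
    (hN0 : ∀ x, N x = 0 ↔ x = 0)
    (hNh : ∀ (a : ℝ) x, N (a • x) = |a| * N x)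
    (hNt : ∀ x y, N (x + y) ≤ N x + N y)
    (Nsq : (Fin n → ℂ) → ℝ)
    (hNsq : ∀ x : Fin n → ℂ, Nsq x = sSup {r : ℝ | ∃ α : ℝ,
      r = N (fun i => (x i).re * Real.cos α + (x i).im * Real.sin α)}) :
    sSup {r : ℝ | ∃ x : Fin n → ℂ, Nsq x ≤ 1 ∧
        (W.transpose.map Complex.ofReal).mulVec x = 0 ∧
        r = Nsq (Matrix.vecMul (star x) (A.map Complex.ofReal))}
    = sSup {r : ℝ | ∃ x : Fin n → ℝ, N x ≤ 1 ∧
        W.transpose.mulVec x = 0 ∧ r = N (Matrix.vecMul x A)} := by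
  -- basic facts about N
  have hpos : ∀ x, 0 ≤ N x := by
    intro x
    have h1 : N ((-1 : ℝ) • x) = N x := by rw [hNh]; simp
    have h2 : N (x + (-1 : ℝ) • x) ≤ N x + N ((-1:ℝ) • x) := hNt _ _
    have h3 : x + (-1:ℝ) • x = 0 := by simp
    rw [h3, (hN0 0).mpr rfl, h1] at h2
    linarith
  -- the function g
  set g : (Fin n → ℝ) → (Fin n → ℝ) → ℝ → ℝ :=
    fun a b α => N (fun i => a i * Real.cos α + b i * Real.sin α) with hg
  have hg_eq : ∀ (a b : Fin n → ℝ) (α : ℝ),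
      (fun i => a i * Real.cos α + b i * Real.sin α) = Real.cos α • a + Real.sin α • b := by
    intro a b α; funext i
    simp [Pi.add_apply, Pi.smul_apply, smul_eq_mul]; ring
  have hg_bound : ∀ a b α, g a b α ≤ N a + N b := by
    intro a b α
    rw [hg]
    simp only
    rw [hg_eq]
    calc N (Real.cos α • a + Real.sin α • b)
        ≤ N (Real.cos α • a) + N (Real.sin α • b) := hNt _ _
      _ = |Real.cos α| * N a + |Real.sin α| * N b := by rw [hNh, hNh]
      _ ≤ N a + N b := by
          have := Real.abs_cos_le_one α
          have := Real.abs_sin_le_one α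
          have := hpos a
          have := hpos b
          nlinarith [abs_nonneg (Real.cos α), abs_nonneg (Real.sin α)]
  have hbdd : ∀ a b, BddAbove {r : ℝ | ∃ α, r = g a b α} := by
    intro a b
    exact ⟨N a + N b, by rintro r ⟨α, rfl⟩; exact hg_bound a b α⟩
  have hne : ∀ a b, Set.Nonempty {r : ℝ | ∃ α, r = g a b α} := fun a b => ⟨g a b 0, 0, rfl⟩
  -- continuity
  have hcont : ∀ a b, Continuous (g a b) := by
    intro a b
    have key : ∀ α β, dist (g a b α) (g a b β) ≤ (N a + N b) * dist α β := by
      have main : ∀ α β, g a b α ≤ g a b β + (N a + N b) * |α - β| := by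
        intro α β
        have split : (Real.cos α • a + Real.sin α • b)
            = (Real.cos β • a + Real.sin β • b)
              + ((Real.cos α - Real.cos β) • a + (Real.sin α - Real.sin β) • b) := by
          funext i
          simp [Pi.add_apply, Pi.smul_apply, smul_eq_mul]
          ring
        have h1 : g a b α = N (Real.cos α • a + Real.sin α • b) := by
          rw [hg]; simp only; rw [hg_eq]
        have h2 : g a b β = N (Real.cos β • a + Real.sin β • b) := by
          rw [hg]; simp only; rw [hg_eq]
        rw [h1, h2, split]
        have t1 := hNt (Real.cos β • a + Real.sin β • b)
          ((Real.cos α - Real.cos β) • a + (Real.sin α - Real.sin β) • b)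
        have t2 := hNt ((Real.cos α - Real.cos β) • a) ((Real.sin α - Real.sin β) • b)
        rw [hNh, hNh] at t2
        have c1 := cos_lip α β
        have c2 := sin_lip α β
        have := hpos a
        have := hpos b
        nlinarith [abs_nonneg (α - β)]
      intro α β
      rw [Real.dist_eq, Real.dist_eq]
      have hm1 := main α β
      have hm2 := main β α
      rw [abs_sub_comm β α] at hm2
      exact abs_sub_le_iff.mpr ⟨by linarith, by linarith⟩
    have : LipschitzWith (Real.toNNReal (N a + N b)) (g a b) := by
      apply LipschitzWith.of_dist_le_mul
      intro α β
      have hc : ((Real.toNNReal (N a + N b)) : ℝ) = N a + N b :=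
        Real.coe_toNNReal _ (by have := hpos a; have := hpos b; linarith)
      rw [hc]; exact key α β
    exact this.continuous
  -- periodicity
  have hper : ∀ a b, Function.Periodic (g a b) (2 * Real.pi) := by
    intro a b α
    rw [hg]
    simp only
    congr 1
    funext i
    rw [Real.cos_add_two_pi, Real.sin_add_two_pi]
  -- maximum attained
  have hmax : ∀ a b, ∃ α₀, ∀ α, g a b α ≤ g a b α₀ := by
    intro a b
    have hpi : (0:ℝ) < 2 * Real.pi := by positivity
    obtain ⟨α₀, hα₀, hm⟩ := (isCompact_Icc (a := (0:ℝ)) (b := 2 * Real.pi)).exists_isMaxOn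
      (Set.nonempty_Icc.mpr (by linarith)) (hcont a b).continuousOn
    refine ⟨α₀, fun α => ?_⟩
    obtain ⟨β, hβ, hfe⟩ := (hper a b).exists_mem_Ico₀ hpi α
    rw [hfe]
    exact hm (Set.mem_Icc_of_Ico hβ)
  have hsup_eq : ∀ a b α₀, (∀ α, g a b α ≤ g a b α₀) →
      sSup {r : ℝ | ∃ α, r = g a b α} = g a b α₀ := by
    intro a b α₀ h
    apply le_antisymm
    · exact csSup_le (hne a b) (by rintro r ⟨α, rfl⟩; exact h α)
    · exact le_csSup (hbdd a b) ⟨α₀, rfl⟩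
  -- Nsq on real vectors
  have hNsq_real : ∀ w : Fin n → ℝ, Nsq (fun i => (w i : ℂ)) = N w := by
    intro w
    rw [hNsq]
    have hset : {r : ℝ | ∃ α : ℝ, r = N (fun i => ((w i : ℂ)).re * Real.cos α
        + ((w i : ℂ)).im * Real.sin α)} = {r : ℝ | ∃ α, r = g w 0 α} := by
      ext r
      constructor <;> rintro ⟨α, rfl⟩ <;> exact ⟨α, by rw [hg]; simp⟩
    rw [hset]
    apply le_antisymm
    · apply csSup_le (hne w 0)
      rintro r ⟨α, rfl⟩
      have : g w 0 α = |Real.cos α| * N w := by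
        rw [hg]; simp only
        have : (fun i => w i * Real.cos α + (0 : Fin n → ℝ) i * Real.sin α)
            = Real.cos α • w := by funext i; simp [smul_eq_mul]; ring
        rw [this, hNh]
      rw [this]
      have := Real.abs_cos_le_one α
      have := hpos w
      nlinarith
    · have : g w 0 0 = N w := by
        rw [hg]; simp only
        congr 1
        funext i
        simp
      rw [← this]
      exact le_csSup (hbdd w 0) ⟨0, rfl⟩
  -- set equality
  have hset : {r : ℝ | ∃ x : Fin n → ℂ, Nsq x ≤ 1 ∧
        (W.transpose.map Complex.ofReal).mulVec x = 0 ∧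
        r = Nsq (Matrix.vecMul (star x) (A.map Complex.ofReal))}
      = {r : ℝ | ∃ x : Fin n → ℝ, N x ≤ 1 ∧
        W.transpose.mulVec x = 0 ∧ r = N (Matrix.vecMul x A)} := by
    ext r
    constructor
    · rintro ⟨x, hx1, hx2, rfl⟩
      set a : Fin n → ℝ := fun i => (x i).re with ha
      set b : Fin n → ℝ := fun i => (x i).im with hb
      -- feasibility of the rotated real vectors
      have hfeas : ∀ α, N (Real.cos α • a - Real.sin α • b) ≤ 1 := by
        intro α
        have hmem : N (Real.cos α • a - Real.sin α • b) = g a b (-α) := by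
          rw [hg]; simp only
          congr 1
          funext i
          rw [Real.cos_neg, Real.sin_neg]
          simp [smul_eq_mul]
          ring
        rw [hmem]
        calc g a b (-α) ≤ sSup {r : ℝ | ∃ α, r = g a b α} := le_csSup (hbdd a b) ⟨-α, rfl⟩
          _ = Nsq x := by rw [hNsq]
          _ ≤ 1 := hx1
      -- the value set
      have hu : ∀ α : ℝ, (fun j => (Matrix.vecMul (star x) (A.map Complex.ofReal) j).re
            * Real.cos α + (Matrix.vecMul (star x) (A.map Complex.ofReal) j).im * Real.sin α)
          = Matrix.vecMul (Real.cos α • a - Real.sin α • b) A := by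
        intro α
        funext j
        have hre : (Matrix.vecMul (star x) (A.map Complex.ofReal) j).re
            = Matrix.vecMul a A j := by
          simp [Matrix.vecMul, dotProduct, Complex.re_sum, Complex.mul_re, ha]
        have him : (Matrix.vecMul (star x) (A.map Complex.ofReal) j).im
            = -Matrix.vecMul b A j := by
          simp [Matrix.vecMul, dotProduct, Complex.im_sum, Complex.mul_im, hb,
            Finset.sum_neg_distrib]
        rw [hre, him]
        simp only [Matrix.vecMul, dotProduct, Pi.sub_apply, Pi.smul_apply,
          smul_eq_mul, Finset.sum_mul, neg_mul]
        rw [← Finset.sum_neg_distrib, ← Finset.sum_add_distrib]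
        exact Finset.sum_congr rfl (fun i _ => by ring)
      -- the value of Nsq (x* A) as a g-sup
      have hval : Nsq (Matrix.vecMul (star x) (A.map Complex.ofReal))
          = sSup {r : ℝ | ∃ α, r = N (Matrix.vecMul (Real.cos α • a - Real.sin α • b) A)} := by
        rw [hNsq]
        congr 1
        ext r
        constructor <;> rintro ⟨α, rfl⟩ <;> exact ⟨α, by rw [hu]⟩
      -- identify with g applied to row-transformed vectors
      have hgid : ∀ α, N (Matrix.vecMul (Real.cos α • a - Real.sin α • b) A)
          = g (Matrix.vecMul a A) (-(Matrix.vecMul b A)) α := by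
        intro α
        rw [hg]
        simp only
        congr 1
        funext j
        have : Matrix.vecMul (Real.cos α • a - Real.sin α • b) A
            = Real.cos α • Matrix.vecMul a A - Real.sin α • Matrix.vecMul b A := by
          rw [sub_eq_add_neg, Matrix.add_vecMul, Matrix.neg_vecMul, Matrix.smul_vecMul,
            Matrix.smul_vecMul, ← sub_eq_add_neg]
        rw [this]
        simp [smul_eq_mul]
        ring
      obtain ⟨α₀, hα₀⟩ := hmax (Matrix.vecMul a A) (-(Matrix.vecMul b A))
      have hsup : Nsq (Matrix.vecMul (star x) (A.map Complex.ofReal))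
          = N (Matrix.vecMul (Real.cos α₀ • a - Real.sin α₀ • b) A) := by
        rw [hval]
        have : {r : ℝ | ∃ α, r = N (Matrix.vecMul (Real.cos α • a - Real.sin α • b) A)}
            = {r : ℝ | ∃ α, r = g (Matrix.vecMul a A) (-(Matrix.vecMul b A)) α} := by
          ext r
          constructor <;> rintro ⟨α, rfl⟩ <;> exact ⟨α, by rw [hgid]⟩
        rw [this, hsup_eq _ _ α₀ hα₀, ← hgid]
      refine ⟨Real.cos α₀ • a - Real.sin α₀ • b, hfeas α₀, ?_, hsup⟩
      -- the constraint
      have hWa : W.transpose.mulVec a = 0 := by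
        funext k
        have := congrFun hx2 k
        simp [Matrix.mulVec, dotProduct] at this ⊢
        have hr := congrArg Complex.re this
        simpa [Complex.re_sum, Complex.mul_re, ha] using hr
      have hWb : W.transpose.mulVec b = 0 := by
        funext k
        have := congrFun hx2 k
        simp [Matrix.mulVec, dotProduct] at this ⊢
        have hr := congrArg Complex.im this
        simpa [Complex.im_sum, Complex.mul_im, hb] using hr
      have : W.transpose.mulVec (Real.cos α₀ • a - Real.sin α₀ • b)
          = Real.cos α₀ • W.transpose.mulVec a - Real.sin α₀ • W.transpose.mulVec b := by
        rw [sub_eq_add_neg, Matrix.mulVec_add, Matrix.mulVec_smul]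
        simp [sub_eq_add_neg, Matrix.mulVec_smul, Matrix.mulVec_neg]
      rw [this, hWa, hWb]
      simp
    · rintro ⟨x, hx1, hx2, rfl⟩
      refine ⟨fun i => (x i : ℂ), ?_, ?_, ?_⟩
      · rw [hNsq_real]; exact hx1
      · funext k
        have := congrFun hx2 k
        simp [Matrix.mulVec, dotProduct] at this ⊢
        have h2 := congrArg (Complex.ofReal) this
        push_cast at h2
        exact h2
      · have hstar : star (fun i => (x i : ℂ)) = fun i => (x i : ℂ) := by
          funext i
          simp [Pi.star_apply, Complex.star_def, Complex.conj_ofReal]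
        have hvm : Matrix.vecMul (star (fun i => (x i : ℂ))) (A.map Complex.ofReal)
            = fun j => ((Matrix.vecMul x A j : ℝ) : ℂ) := by
          rw [hstar]
          funext j
          simp [Matrix.vecMul, dotProduct, Complex.ofReal_sum]
        rw [hvm, hNsq_real]
  rw [hset]
end

section
/- Let A ∈ M_n(ℝ) be nonnegative and x ≥ 0 a right eigenvector with Ax = ρ(A)x. Then for any norm ‖·‖ on ℝⁿ, every eigenvalue λ of A with λ ≠ ρ(A) (counting only eigenvalues other than the spectral radius) satisfies |λ| ≤ τ(x,A) := max{‖zᵀA‖ : z ∈ ℝⁿ, ‖z‖ ≤ 1, zᵀx = 0}. -/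
open Matrix

section Aux

variable {n : ℕ} (N : (Fin n → ℝ) → ℝ)
    (hN0 : ∀ y, N y = 0 ↔ y = 0)
    (hNh : ∀ (a : ℝ) y, N (a • y) = |a| * N y)
    (hNt : ∀ y z, N (y + z) ≤ N y + N z)

include hNh in
lemma aux_N_zero : N 0 = 0 := by simpa using hNh 0 0

include hNh hNt in
lemma aux_N_nonneg : ∀ y, 0 ≤ N y := by
  intro y
  have h1 := hNt y ((-1 : ℝ) • y)
  have h2 := hNh (-1) y
  have h3 : y + (-1 : ℝ) • y = 0 := by simp
  rw [h3, aux_N_zero N hNh] at h1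
  rw [h2] at h1
  simp at h1
  linarith

include hNh hNt in
lemma aux_N_sum {ι : Type*} (s : Finset ι) (f : ι → Fin n → ℝ) :
    N (∑ j ∈ s, f j) ≤ ∑ j ∈ s, N (f j) := by
  classical
  induction s using Finset.induction with
  | empty => simp [aux_N_zero N hNh]
  | insert j s hj ih =>
    rw [Finset.sum_insert hj, Finset.sum_insert hj]
    exact le_trans (hNt _ _) (by linarith)

include hNh hNt in
lemma aux_N_le : ∀ y, N y ≤ (∑ j, N (Pi.single j 1)) * ‖y‖ := by
  intro y
  have hy : y = ∑ j, (y j) • (Pi.single j 1 : Fin n → ℝ) := by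
    ext k
    simp [Pi.single_apply, Finset.sum_ite_eq' (Finset.univ) k]
  calc N y = N (∑ j, (y j) • (Pi.single j 1 : Fin n → ℝ)) := by rw [← hy]
    _ ≤ ∑ j, N ((y j) • (Pi.single j 1 : Fin n → ℝ)) := aux_N_sum N hNh hNt _ _
    _ ≤ ∑ j, ‖y‖ * N ((Pi.single j 1 : Fin n → ℝ)) := by
        refine Finset.sum_le_sum fun j _ => ?_
        rw [hNh]
        have h1 : |y j| ≤ ‖y‖ := by
          simpa [Real.norm_eq_abs] using norm_le_pi_norm y j
        exact mul_le_mul_of_nonneg_right h1 (aux_N_nonneg N hNh hNt _)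
    _ = (∑ j, N (Pi.single j 1)) * ‖y‖ := by rw [Finset.sum_mul]; simp [mul_comm]

include hNh hNt in
lemma aux_N_cont : Continuous N := by
  set C : ℝ := ∑ j, N (Pi.single j 1) with hC
  have hC0 : 0 ≤ C := Finset.sum_nonneg fun j _ => aux_N_nonneg N hNh hNt _
  have key : ∀ a b, N a - N b ≤ C * ‖a - b‖ := by
    intro a b
    have h1 := hNt (a - b) b
    simp only [sub_add_cancel] at h1
    have h2 := aux_N_le N hNh hNt (a - b)
    linarith
  have key2 : ∀ a b, dist (N a) (N b) ≤ C * dist a b := by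
    intro a b
    rw [Real.dist_eq, dist_eq_norm]
    rcases abs_cases (N a - N b) with ⟨h, _⟩ | ⟨h, _⟩
    · rw [h]; exact key a b
    · rw [h]
      have := key b a
      rw [norm_sub_rev] at this
      linarith
  exact (LipschitzWith.of_dist_le_mul (K := ⟨C, hC0⟩) (f := N)
    fun a b => key2 a b).continuous

end Aux

/-- Let `A ∈ M_n(ℝ)` be nonnegative and `x ≥ 0` a right eigenvector with
`A x = ρ(A) x`, where `ρ(A)` is the spectral radius (the largest modulus of the
complex eigenvalues of `A`).  Then for any norm `N` on `ℝⁿ`, every complex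
eigenvalue `μ ≠ ρ(A)` of `A` satisfies
`|μ| ≤ τ(x, A) = max {N (zᵀ A) : z ∈ ℝⁿ, N z ≤ 1, zᵀ x = 0}`. -/
theorem stmt_19 (n : ℕ) (A : Matrix (Fin n) (Fin n) ℝ)
    (hA : ∀ i j, 0 ≤ A i j)
    (ρ : ℝ)
    (hρ : ρ = sSup ((fun w : ℂ => ‖w‖) '' spectrum ℂ (A.map Complex.ofReal)))
    (x : Fin n → ℝ) (hx : ∀ i, 0 ≤ x i) (hx0 : x ≠ 0)
    (hAx : A.mulVec x = ρ • x)
    (N : (Fin n → ℝ) → ℝ)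
    (hN0 : ∀ y, N y = 0 ↔ y = 0)
    (hNh : ∀ (a : ℝ) y, N (a • y) = |a| * N y)
    (hNt : ∀ y z, N (y + z) ≤ N y + N z) :
    ∀ μ ∈ spectrum ℂ (A.map Complex.ofReal), μ ≠ (ρ : ℂ) →
      ‖μ‖ ≤ sSup {r : ℝ | ∃ z : Fin n → ℝ, N z ≤ 1 ∧
        dotProduct z x = 0 ∧ r = N (Matrix.vecMul z A)} := by
  intro μ hμ hμρ
  -- n ≠ 0
  rcases Nat.eq_zero_or_pos n with hn | hn
  · exfalso; apply hx0; subst hn; funext i; exact i.elim0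
  haveI : NeZero n := ⟨hn.ne'⟩
  set S := {r : ℝ | ∃ z : Fin n → ℝ, N z ≤ 1 ∧
      dotProduct z x = 0 ∧ r = N (Matrix.vecMul z A)} with hS
  have hNzero := aux_N_zero N hNh
  have hNnn := aux_N_nonneg N hNh hNt
  -- minimum of N on the unit sphere
  obtain ⟨z₀, hz₀s, hz₀min'⟩ := (isCompact_sphere (0 : Fin n → ℝ) 1).exists_isMinOn
    (NormedSpace.sphere_nonempty.mpr zero_le_one) ((aux_N_cont N hNh hNt).continuousOn)
  have hz₀min := isMinOn_iff.mp hz₀min'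
  set m₀ : ℝ := N z₀ with hm₀
  have hz₀ne : z₀ ≠ 0 := by
    intro h
    rw [mem_sphere_zero_iff_norm, h] at hz₀s
    simpa using hz₀s
  have hm₀pos : 0 < m₀ := lt_of_le_of_ne (hNnn z₀) fun h => hz₀ne ((hN0 z₀).mp h.symm)
  have hball : ∀ z : Fin n → ℝ, N z ≤ 1 → ‖z‖ ≤ 1 / m₀ := by
    intro z hz
    rcases eq_or_ne z 0 with rfl | hzne
    · simp only [norm_zero]; positivity
    · have hzn : (0:ℝ) < ‖z‖ := norm_pos_iff.mpr hzne
      have hmem : ‖z‖⁻¹ • z ∈ Metric.sphere (0 : Fin n → ℝ) 1 := by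
        rw [mem_sphere_zero_iff_norm, norm_smul, norm_inv, norm_norm,
          inv_mul_cancel₀ hzn.ne']
      have h1 := hz₀min _ hmem
      rw [hNh, abs_of_pos (inv_pos.mpr hzn)] at h1
      have h2 : m₀ ≤ ‖z‖⁻¹ := by
        refine le_trans h1 ?_
        calc ‖z‖⁻¹ * N z ≤ ‖z‖⁻¹ * 1 :=
              mul_le_mul_of_nonneg_left hz (by positivity)
          _ = ‖z‖⁻¹ := mul_one _
      calc ‖z‖ = ‖z‖ * m₀ / m₀ := by field_simp
        _ ≤ 1 / m₀ := by
            gcongr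
            calc ‖z‖ * m₀ ≤ ‖z‖ * ‖z‖⁻¹ :=
                  mul_le_mul_of_nonneg_left h2 hzn.le
              _ = 1 := mul_inv_cancel₀ hzn.ne'
  -- S is bounded above
  set L := LinearMap.toContinuousLinearMap (Matrix.vecMulLinear A) with hL
  set C : ℝ := ∑ j, N (Pi.single j 1) with hC
  have hC0 : 0 ≤ C := Finset.sum_nonneg fun j _ => hNnn _
  have hbdd : BddAbove S := by
    refine ⟨C * ‖L‖ * (1 / m₀), fun r hr => ?_⟩
    obtain ⟨z, hz1, -, rfl⟩ := hr
    calc N (Matrix.vecMul z A) ≤ C * ‖Matrix.vecMul z A‖ := aux_N_le N hNh hNt _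
      _ = C * ‖L z‖ := rfl
      _ ≤ C * (‖L‖ * ‖z‖) := by
          exact mul_le_mul_of_nonneg_left (L.le_opNorm z) hC0
      _ ≤ C * (‖L‖ * (1 / m₀)) := by
          refine mul_le_mul_of_nonneg_left ?_ hC0
          exact mul_le_mul_of_nonneg_left (hball z hz1) (norm_nonneg L)
      _ = C * ‖L‖ * (1 / m₀) := by ring
  -- complex left eigenvector
  set M := A.map (Complex.ofReal) with hM
  have hdet : (algebraMap ℂ (Matrix (Fin n) (Fin n) ℂ) μ - M).det = 0 := by
    by_contra hdne
    exact spectrum.mem_iff.mp hμ ((Matrix.isUnit_iff_isUnit_det _).mpr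
      (isUnit_iff_ne_zero.mpr hdne))
  obtain ⟨z, hzne, hzeig⟩ := Matrix.exists_vecMul_eq_zero_iff.mpr hdet
  have hzeig' : Matrix.vecMul z M = μ • z := by
    have h1 : Matrix.vecMul z (algebraMap ℂ (Matrix (Fin n) (Fin n) ℂ) μ - M)
        = μ • z - Matrix.vecMul z M := by
      rw [Matrix.vecMul_sub]
      congr 1
      rw [Algebra.algebraMap_eq_smul_one]
      ext j
      simp [Matrix.vecMul, dotProduct, Matrix.one_apply, mul_ite,
        Finset.sum_ite_eq, mul_comm]
    rw [h1] at hzeig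
    rw [sub_eq_zero] at hzeig
    exact hzeig.symm
  -- complex version of x and the eigen relation
  set xc : Fin n → ℂ := fun i => (x i : ℂ) with hxc
  have hMx : M.mulVec xc = (ρ : ℂ) • xc := by
    ext j
    have h := congrFun hAx j
    simp only [Matrix.mulVec, dotProduct, Pi.smul_apply, smul_eq_mul] at h ⊢
    simp only [hM, hxc, Matrix.map_apply, ← Complex.ofReal_mul, ← Complex.ofReal_sum, h]
  -- orthogonality
  have hd : dotProduct z xc = 0 := by
    have h1 : μ * dotProduct z xc = (ρ:ℂ) * dotProduct z xc := by
      calc μ * dotProduct z xc = dotProduct (μ • z) xc := by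
            rw [smul_dotProduct]; simp
        _ = dotProduct (Matrix.vecMul z M) xc := by rw [hzeig']
        _ = dotProduct z (M.mulVec xc) := (dotProduct_mulVec z M xc).symm
        _ = dotProduct z ((ρ:ℂ) • xc) := by rw [hMx]
        _ = (ρ:ℂ) * dotProduct z xc := by
            rw [dotProduct_smul]; simp
    have h2 : (μ - (ρ:ℂ)) * dotProduct z xc = 0 := by ring_nf; linear_combination h1
    rcases mul_eq_zero.mp h2 with h | h
    · exact absurd (sub_eq_zero.mp h) hμρ
    · exact h
  -- the rotated real vectors
  set w : ℂ → (Fin n → ℝ) := fun c i => (c * z i).re with hw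
  have hwcont : Continuous w := by
    refine continuous_pi fun i => Complex.continuous_re.comp ?_
    exact continuous_id.mul continuous_const
  have hweig : ∀ c, Matrix.vecMul (w c) A = w (c * μ) := by
    intro c
    ext j
    simp only [Matrix.vecMul, dotProduct, hw]
    have : ∀ i, (c * z i).re * A i j = (c * z i * (A i j : ℂ)).re := by
      intro i; simp [Complex.mul_re]
    simp_rw [this, ← Complex.re_sum]
    congr 1
    have hz' : ∑ i, z i * (A i j : ℂ) = μ * z j := by
      have := congrFun hzeig' j
      simp only [Matrix.vecMul, dotProduct, hM, Matrix.map_apply,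
        Pi.smul_apply, smul_eq_mul] at this
      exact this
    calc ∑ i, c * z i * (A i j : ℂ) = c * ∑ i, z i * (A i j : ℂ) := by
          rw [Finset.mul_sum]
          exact Finset.sum_congr rfl fun i _ => by ring
      _ = c * (μ * z j) := by rw [hz']
      _ = c * μ * z j := by ring
  have hwsmul : ∀ (c : ℂ) (t : ℝ), w (c * (t:ℂ)) = t • w c := by
    intro c t
    ext i
    simp only [hw, Pi.smul_apply, smul_eq_mul]
    have : c * (t:ℂ) * z i = (t:ℂ) * (c * z i) := by ring
    rw [this]
    simp [Complex.mul_re]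
  have hworth : ∀ c, dotProduct (w c) x = 0 := by
    intro c
    simp only [dotProduct, hw]
    have : ∀ i, (c * z i).re * x i = (c * (z i * xc i)).re := by
      intro i; simp [hxc, Complex.mul_re, Complex.ofReal_re, Complex.ofReal_im]; ring
    simp_rw [this, ← Complex.re_sum, ← Finset.mul_sum]
    have : ∑ i, z i * xc i = 0 := hd
    rw [this, mul_zero, Complex.zero_re]
  -- maximize N ∘ w on the unit circle
  obtain ⟨c₀, hc₀s, hc₀max'⟩ := (isCompact_sphere (0 : ℂ) 1).exists_isMaxOn
    (NormedSpace.sphere_nonempty.mpr zero_le_one)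
    ((aux_N_cont N hNh hNt).comp hwcont).continuousOn
  have hc₀max := isMaxOn_iff.mp hc₀max'
  set m' : ℝ := N (w c₀) with hm'
  have hm'pos : 0 < m' := by
    obtain ⟨i, hi⟩ := Function.ne_iff.mp hzne
    set c : ℂ := (starRingEnd ℂ) (z i) / ((‖z i‖ : ℝ) : ℂ) with hc
    have hzi : (0:ℝ) < ‖z i‖ := by
      simpa using norm_pos_iff.mpr hi
    have hcs : c ∈ Metric.sphere (0:ℂ) 1 := by
      rw [mem_sphere_zero_iff_norm, hc]
      rw [norm_div]
      simp only [Complex.norm_conj, Complex.norm_real, Real.norm_eq_abs, abs_norm,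
        abs_of_pos hzi]
      exact div_self hzi.ne'
    have hwc : w c i = ‖z i‖ := by
      simp only [hw, hc]
      have : (starRingEnd ℂ) (z i) / ((‖z i‖ : ℝ) : ℂ) * z i
          = ((‖z i‖ : ℝ) : ℂ) := by
        rw [div_mul_eq_mul_div, mul_comm, Complex.mul_conj,
          div_eq_iff (by exact_mod_cast hzi.ne' : ((‖z i‖ : ℝ) : ℂ) ≠ 0)]
        norm_cast
        rw [← Complex.sq_norm]
        ring
      rw [this, Complex.ofReal_re]
    have hwcne : w c ≠ 0 := by
      intro h
      rw [h] at hwc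
      simp at hwc
      exact hi (norm_eq_zero.mp hwc.symm)
    have h1 : 0 < N (w c) := lt_of_le_of_ne (hNnn _) fun h => hwcne ((hN0 _).mp h.symm)
    exact lt_of_lt_of_le h1 (hc₀max c hcs)
  -- now split on μ = 0
  rcases eq_or_ne μ 0 with rfl | hμ0
  · -- trivial case
    have h0 : (0:ℝ) ∈ S := by
      refine ⟨0, by rw [hNzero]; norm_num, by simp, ?_⟩
      rw [Matrix.zero_vecMul, hNzero]
    simpa using le_csSup hbdd h0
  · set t : ℝ := ‖μ‖ with ht
    have htpos : 0 < t := norm_pos_iff.mpr hμ0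
    set u : ℂ := μ / (t : ℂ) with hu
    have hut : (t : ℂ) * u = μ := by
      rw [hu, mul_div_cancel₀]
      exact_mod_cast htpos.ne'
    have huabs : ‖u‖ = 1 := by
      rw [hu, norm_div]
      simp [abs_of_pos htpos, ← ht, div_self htpos.ne']
    set c₁ : ℂ := c₀ * u⁻¹ with hc₁
    have hc₁s : c₁ ∈ Metric.sphere (0:ℂ) 1 := by
      rw [mem_sphere_zero_iff_norm] at hc₀s ⊢
      rw [hc₁, norm_mul, norm_inv, hc₀s]
      simp [huabs]
    have hu0 : u ≠ 0 := by
      intro h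
      rw [h, norm_zero] at huabs
      norm_num at huabs
    have hc₁μ : c₁ * μ = c₀ * (t : ℂ) := by
      rw [hc₁, ← hut, mul_comm (t:ℂ) u, ← mul_assoc, mul_assoc c₀ u⁻¹ u,
        inv_mul_cancel₀ hu0, mul_one]
    set z' : Fin n → ℝ := m'⁻¹ • w c₁ with hz'
    have hmem : t ∈ S := by
      refine ⟨z', ?_, ?_, ?_⟩
      · rw [hz', hNh, abs_of_pos (inv_pos.mpr hm'pos)]
        calc m'⁻¹ * N (w c₁) ≤ m'⁻¹ * m' := by
              exact mul_le_mul_of_nonneg_left (hc₀max c₁ hc₁s) (by positivity)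
          _ = 1 := inv_mul_cancel₀ hm'pos.ne'
      · rw [hz', smul_dotProduct, hworth, smul_zero]
      · rw [hz', Matrix.smul_vecMul, hweig, hc₁μ, hwsmul, hNh, hNh,
          abs_of_pos (inv_pos.mpr hm'pos), abs_of_pos htpos]
        rw [← hm']
        field_simp
    exact le_csSup hbdd hmem
end
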